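/- arXiv:1311.6635 — 5 statements merged into one kernel-verified Lean document; each statement's English description precedes it below -/
import Mathlib

section
/- For any finite collection of events A_1, ..., A_M in a probability space, the probability of their union is at least the sum over i of P(A_i)^2 divided by the sum over i' of P(A_i ∩ A_{i'}) (de Caen's bound), assuming each P(A_i) > 0. -/
open MeasureTheory Finset

private lemma deCaen_alg {M : ℕ} (x : Finset (Fin M) → ℝ) (hx : ∀ S, 0 ≤ x S) :
    ∑ i, (∑ S ∈ univ.filter (fun S => i ∈ S), x S) ^ 2 /
        (∑ i', ∑ S ∈ univ.filter (fun S => i ∈ S ∧ i' ∈ S), x S)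
      ≤ ∑ S ∈ univ.filter (fun S : Finset (Fin M) => S ≠ ∅), x S := by
  have hden : ∀ i : Fin M,
      (∑ i', ∑ S ∈ univ.filter (fun S => i ∈ S ∧ i' ∈ S), x S)
        = ∑ S ∈ univ.filter (fun S => i ∈ S), (S.card : ℝ) * x S := by
    intro i
    simp only [Finset.sum_filter]
    rw [Finset.sum_comm]
    refine Finset.sum_congr rfl fun S _ => ?_
    by_cases hiS : i ∈ S
    · simp only [hiS, true_and, if_true]
      rw [Finset.sum_ite_mem, Finset.univ_inter, Finset.sum_const, nsmul_eq_mul]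
    · simp [hiS]
  have key : ∀ i : Fin M,
      (∑ S ∈ univ.filter (fun S => i ∈ S), x S) ^ 2 /
        (∑ S ∈ univ.filter (fun S => i ∈ S), (S.card : ℝ) * x S)
      ≤ ∑ S ∈ univ.filter (fun S => i ∈ S), x S / (S.card : ℝ) := by
    intro i
    have hcard : ∀ S ∈ univ.filter (fun S : Finset (Fin M) => i ∈ S), (0:ℝ) < S.card := by
      intro S hS
      simp only [mem_filter] at hS
      exact_mod_cast Finset.card_pos.2 ⟨i, hS.2⟩
    refine div_le_of_le_mul₀ (sum_nonneg fun S hS => mul_nonneg (by positivity) (hx S))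
      (sum_nonneg fun S hS => div_nonneg (hx S) (by positivity)) ?_
    refine sum_sq_le_sum_mul_sum_of_sq_eq_mul _
      (fun S hS => div_nonneg (hx S) (hcard S hS).le)
      (fun S hS => mul_nonneg (by positivity) (hx S)) fun S hS => ?_
    field_simp
    rw [eq_div_iff (hcard S hS).ne']
  calc ∑ i, (∑ S ∈ univ.filter (fun S => i ∈ S), x S) ^ 2 /
        (∑ i', ∑ S ∈ univ.filter (fun S => i ∈ S ∧ i' ∈ S), x S)
      ≤ ∑ i, ∑ S ∈ univ.filter (fun S => i ∈ S), x S / (S.card : ℝ) := by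
        refine Finset.sum_le_sum fun i _ => ?_
        rw [hden i]; exact key i
    _ = ∑ S ∈ univ.filter (fun S : Finset (Fin M) => S ≠ ∅), x S := by
        simp only [Finset.sum_filter]
        rw [Finset.sum_comm]
        refine Finset.sum_congr rfl fun S _ => ?_
        rw [Finset.sum_ite_mem, Finset.univ_inter, Finset.sum_const, nsmul_eq_mul]
        by_cases hS : S = ∅
        · simp [hS]
        · rw [if_pos hS, mul_div_cancel₀]
          exact_mod_cast Finset.card_ne_zero.2 (Finset.nonempty_iff_ne_empty.2 hS)

/-- de Caen's bound: the probability of a finite union of events is at least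
`∑ i, P(A i)² / ∑ i', P(A i ∩ A i')`. -/
theorem deCaen_bound {Ω : Type*} [MeasurableSpace Ω] (μ : Measure Ω)
    [IsProbabilityMeasure μ] {M : ℕ} (A : Fin M → Set Ω)
    (hA : ∀ i, MeasurableSet (A i)) (hpos : ∀ i, 0 < (μ (A i)).toReal) :
    ∑ i, ((μ (A i)).toReal) ^ 2 / (∑ i', (μ (A i ∩ A i')).toReal)
      ≤ (μ (⋃ i, A i)).toReal := by
  classical
  -- atoms of the algebra generated by the `A i`
  set B : Finset (Fin M) → Set Ω := fun S => {ω | ∀ i, ω ∈ A i ↔ i ∈ S} with hB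
  have hBmeas : ∀ S, MeasurableSet (B S) := by
    intro S
    have : B S = ⋂ i, (if i ∈ S then A i else (A i)ᶜ) := by
      ext ω
      simp only [hB, Set.mem_setOf_eq, Set.mem_iInter]
      refine ⟨fun h i => ?_, fun h i => ?_⟩
      · by_cases hiS : i ∈ S
        · simpa [hiS] using (h i).2 hiS
        · simpa [hiS] using fun hω => hiS ((h i).1 hω)
      · have := h i
        by_cases hiS : i ∈ S <;> simp_all
    rw [this]
    exact MeasurableSet.iInter fun i => by split <;> [exact hA i; exact (hA i).compl]
  have hBdisj : ∀ S T : Finset (Fin M), S ≠ T → Disjoint (B S) (B T) := by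
    intro S T hST
    rw [Set.disjoint_left]
    intro ω hS hT
    exact hST (Finset.ext fun i => by rw [← hS i, hT i])
  -- membership characterization
  have hmem : ∀ (ω : Ω) (t : Finset (Finset (Fin M))),
      (ω ∈ ⋃ S ∈ t, B S) ↔ univ.filter (fun i => ω ∈ A i) ∈ t := by
    intro ω t
    constructor
    · rintro hω
      simp only [Set.mem_iUnion] at hω
      obtain ⟨S, hSt, hωS⟩ := hω
      have : S = univ.filter (fun i => ω ∈ A i) := by
        ext i; simp [← hωS i]
      rwa [← this]
    · intro h
      refine Set.mem_iUnion₂.2 ⟨_, h, fun i => ?_⟩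
      simp
  -- measure of a union of atoms
  have hmeasure : ∀ t : Finset (Finset (Fin M)),
      (μ (⋃ S ∈ t, B S)).toReal = ∑ S ∈ t, (μ (B S)).toReal := by
    intro t
    rw [measure_biUnion_finset (fun S _ T _ hST => hBdisj S T hST) (fun S _ => hBmeas S),
      ENNReal.toReal_sum]
    exact fun S _ => measure_ne_top μ _
  have hAi : ∀ i, A i = ⋃ S ∈ univ.filter (fun S : Finset (Fin M) => i ∈ S), B S := by
    intro i; ext ω; rw [hmem]; simp
  have hAii' : ∀ i i', A i ∩ A i'
      = ⋃ S ∈ univ.filter (fun S : Finset (Fin M) => i ∈ S ∧ i' ∈ S), B S := by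
    intro i i'; ext ω; rw [hmem]; simp
  have hU : (⋃ i, A i) = ⋃ S ∈ univ.filter (fun S : Finset (Fin M) => S ≠ ∅), B S := by
    ext ω; rw [hmem]
    simp only [Set.mem_iUnion, mem_filter, mem_univ, true_and, ← Finset.nonempty_iff_ne_empty,
      Finset.filter_nonempty_iff]
  calc ∑ i, ((μ (A i)).toReal) ^ 2 / (∑ i', (μ (A i ∩ A i')).toReal)
      = ∑ i, (∑ S ∈ univ.filter (fun S => i ∈ S), (μ (B S)).toReal) ^ 2 /
          (∑ i', ∑ S ∈ univ.filter (fun S => i ∈ S ∧ i' ∈ S), (μ (B S)).toReal) := by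
        refine Finset.sum_congr rfl fun i _ => ?_
        have h1 : (μ (A i)).toReal
            = ∑ S ∈ univ.filter (fun S => i ∈ S), (μ (B S)).toReal := by
          rw [hAi i, hmeasure]
        have h2 : ∀ i', (μ (A i ∩ A i')).toReal
            = ∑ S ∈ univ.filter (fun S => i ∈ S ∧ i' ∈ S), (μ (B S)).toReal := fun i' => by
          rw [hAii' i i', hmeasure]
        rw [h1]
        congr 1
        exact Finset.sum_congr rfl fun i' _ => h2 i'
    _ ≤ ∑ S ∈ univ.filter (fun S : Finset (Fin M) => S ≠ ∅), (μ (B S)).toReal :=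
        deCaen_alg _ (fun S => ENNReal.toReal_nonneg)
    _ = (μ (⋃ i, A i)).toReal := by rw [hU, hmeasure]
end

section
/- If A_1, ..., A_M are pairwise independent events, then the probability of their union is at least one half of the minimum of 1 and the sum of the individual probabilities: ℙ(⋃_i A_i) ≥ (1/2) min{1, Σ_i ℙ(A_i)}. -/
open MeasureTheory
open ENNReal

/-- For pairwise independent events, the probability of the union is at least half of
the truncated union bound `min{1, ∑ i P(A i)}`. -/
theorem pairwise_indep_union_lower {Ω : Type*} [MeasurableSpace Ω] (μ : Measure Ω)
    [IsProbabilityMeasure μ] {M : ℕ} (A : Fin M → Set Ω)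
    (hA : ∀ i, MeasurableSet (A i))
    (hpair : ∀ i j, i ≠ j → μ (A i ∩ A j) = μ (A i) * μ (A j)) :
    (1 / 2) * min 1 (∑ i, (μ (A i)).toReal) ≤ (μ (⋃ i, A i)).toReal := by
  set U := ⋃ i, A i with hU
  set f : Ω → ℝ≥0∞ := fun ω => ∑ i, (A i).indicator 1 ω with hf
  set g : Ω → ℝ≥0∞ := U.indicator 1 with hg
  set S : ℝ≥0∞ := ∑ i, μ (A i) with hS
  have hfm : Measurable f := by
    apply Finset.measurable_sum
    intro i _
    exact (measurable_one.indicator (hA i))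
  have hgm : Measurable g := measurable_one.indicator (MeasurableSet.iUnion hA)
  have hfg : f * g = f := by
    funext ω
    by_cases hω : ω ∈ U
    · simp [hg, Set.indicator_of_mem hω]
    · have : f ω = 0 := by
        simp only [hf]
        apply Finset.sum_eq_zero
        intro i _
        have : ω ∉ A i := fun h => hω (Set.mem_iUnion.2 ⟨i, h⟩)
        simp [Set.indicator_of_notMem this]
      simp [this]
  have hintf : ∫⁻ ω, f ω ∂μ = S := by
    simp only [hf, hS]
    rw [lintegral_finset_sum _ (fun i _ => measurable_one.indicator (hA i))]
    exact Finset.sum_congr rfl fun i _ => lintegral_indicator_one (hA i)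
  have hintf2 : ∫⁻ ω, f ω * f ω ∂μ ≤ S + S * S := by
    have h1 : ∀ ω, f ω * f ω = ∑ i, ∑ j, ((A i ∩ A j).indicator 1 ω) := by
      intro ω
      simp only [hf, Finset.sum_mul_sum]
      refine Finset.sum_congr rfl fun i _ => Finset.sum_congr rfl fun j _ => ?_
      rw [Set.inter_indicator_one]
      rfl
    simp only [h1]
    rw [lintegral_finset_sum _ (fun i _ => Finset.measurable_sum _
      (fun j _ => measurable_one.indicator ((hA i).inter (hA j))))]
    have h2 : ∀ i : Fin M, ∫⁻ ω, ∑ j, ((A i ∩ A j).indicator 1 ω) ∂μ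
        ≤ μ (A i) + μ (A i) * S := by
      intro i
      rw [lintegral_finset_sum _ (fun j _ => measurable_one.indicator ((hA i).inter (hA j)))]
      have h3 : ∀ j : Fin M, ∫⁻ ω, (A i ∩ A j).indicator 1 ω ∂μ = μ (A i ∩ A j) :=
        fun j => lintegral_indicator_one ((hA i).inter (hA j))
      simp only [h3]
      rw [← Finset.add_sum_erase _ _ (Finset.mem_univ i)]
      gcongr
      · simp [Set.inter_self]
      · rw [hS, Finset.mul_sum]
        refine le_trans (Finset.sum_le_sum (fun j hj => ?_))
          (Finset.sum_le_sum_of_subset (Finset.erase_subset _ _))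
        rw [hpair i j (fun h => (Finset.mem_erase.1 hj).1 h.symm)]
    calc ∑ i, ∫⁻ ω, ∑ j, ((A i ∩ A j).indicator 1 ω) ∂μ
        ≤ ∑ i, (μ (A i) + μ (A i) * S) := Finset.sum_le_sum (fun i _ => h2 i)
      _ = S + S * S := by rw [Finset.sum_add_distrib, ← Finset.sum_mul, hS]
  -- Cauchy-Schwarz
  have hCS : S ≤ (∫⁻ ω, f ω * f ω ∂μ) ^ (1/2 : ℝ) * (μ U) ^ (1/2 : ℝ) := by
    have hconj : (2 : ℝ).HolderConjugate 2 := Real.HolderConjugate.two_two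
    have := ENNReal.lintegral_mul_le_Lp_mul_Lq μ hconj hfm.aemeasurable hgm.aemeasurable
    rw [hfg, hintf] at this
    refine this.trans (le_of_eq ?_)
    congr 1
    · congr 1
      refine lintegral_congr fun ω => ?_
      rw [show ((2:ℝ)) = ((2:ℕ):ℝ) by norm_num, ENNReal.rpow_natCast]
      ring
    · have : ∫⁻ ω, g ω ^ (2:ℝ) ∂μ = μ U := by
        have : ∀ ω, g ω ^ (2:ℝ) = g ω := by
          intro ω
          by_cases hω : ω ∈ U <;> simp [hg, hω]
        simp only [this]
        exact lintegral_indicator_one (MeasurableSet.iUnion hA)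
      rw [this]
  have hkey : S * S ≤ (S + S * S) * μ U := by
    have h4 : S * S ≤ ((∫⁻ ω, f ω * f ω ∂μ) ^ (1/2 : ℝ) * (μ U) ^ (1/2 : ℝ)) ^ (2:ℝ) := by
      calc S * S = S ^ (2:ℝ) := by
            rw [show ((2:ℝ)) = ((2:ℕ):ℝ) by norm_num, ENNReal.rpow_natCast]; ring
        _ ≤ _ := by exact ENNReal.rpow_le_rpow hCS (by norm_num)
    rw [ENNReal.mul_rpow_of_nonneg _ _ (by norm_num), ← ENNReal.rpow_mul, ← ENNReal.rpow_mul] at h4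
    norm_num at h4
    calc S * S ≤ (∫⁻ ω, f ω * f ω ∂μ) * μ U := h4
      _ ≤ (S + S * S) * μ U := by gcongr
  -- pass to reals
  have hSne : S ≠ ⊤ := by
    rw [hS]
    exact ENNReal.sum_ne_top.2 (fun i _ => measure_ne_top μ _)
  have hUne : μ U ≠ ⊤ := measure_ne_top μ _
  have hkeyR : S.toReal * S.toReal ≤ (S.toReal + S.toReal * S.toReal) * (μ U).toReal := by
    have := ENNReal.toReal_mono (by finiteness) hkey
    rwa [ENNReal.toReal_mul, ENNReal.toReal_mul, ENNReal.toReal_add hSne (by finiteness),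
      ENNReal.toReal_mul] at this
  have hSval : ∑ i, (μ (A i)).toReal = S.toReal := by
    rw [hS, ENNReal.toReal_sum (fun i _ => measure_ne_top μ _)]
  rw [hSval]
  set s := S.toReal
  set u := (μ U).toReal
  have hs : 0 ≤ s := ENNReal.toReal_nonneg
  have hu : 0 ≤ u := ENNReal.toReal_nonneg
  rcases le_total s 1 with h | h
  · rw [min_eq_right h]
    nlinarith [mul_nonneg hu hs]
  · rw [min_eq_left h]
    nlinarith [mul_nonneg hu hs, mul_le_mul_of_nonneg_left h (mul_nonneg hu hs)]
end

section
/- Let Z_1(1),...,Z_1(M_1) be identically distributed random variables on Z_1 with common law P_{Z_1}, and Z_2(1),...,Z_2(M_2) identically distributed on Z_2 with common law P_{Z_2}, with the two families independent of each other. Then for any measurable set A ⊆ Z_1 × Z_2, the probability that some pair (Z_1(i), Z_2(j)) lies in A is at most min{1, M_1 · E[min{1, M_2 · ℙ[(Z_1, Z_2) ∈ A | Z_1]}]}, where (Z_1, Z_2) ~ P_{Z_1} × P_{Z_2}. -/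
open MeasureTheory ProbabilityTheory
open scoped ENNReal

/-- Upper bound on the probability of a doubly-indexed union: with `Z₁(i)` identically
distributed with law `P₁`, `Z₂(j)` identically distributed with law `P₂`, and the two
families independent, the probability that some pair lies in `A` is at most
`min{1, M₁ · E[min{1, M₂ · P₂(A_{Z₁})}]}`. -/
theorem union_double_upper {Ω α β : Type*} [MeasurableSpace Ω] [MeasurableSpace α]
    [MeasurableSpace β] (μ : Measure Ω) [IsProbabilityMeasure μ] {M₁ M₂ : ℕ}
    (Z₁ : Fin M₁ → Ω → α) (Z₂ : Fin M₂ → Ω → β)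
    (P₁ : Measure α) (P₂ : Measure β) [IsProbabilityMeasure P₁] [IsProbabilityMeasure P₂]
    (hm₁ : ∀ i, Measurable (Z₁ i)) (hm₂ : ∀ j, Measurable (Z₂ j))
    (hid₁ : ∀ i, μ.map (Z₁ i) = P₁) (hid₂ : ∀ j, μ.map (Z₂ j) = P₂)
    (hindep : IndepFun (fun ω i => Z₁ i ω) (fun ω j => Z₂ j ω) μ)
    (A : Set (α × β)) (hA : MeasurableSet A) :
    (μ {ω | ∃ i j, (Z₁ i ω, Z₂ j ω) ∈ A}).toReal
      ≤ min 1 ((M₁ : ℝ) * ∫ z₁, min 1 ((M₂ : ℝ) * (P₂ {z₂ | (z₁, z₂) ∈ A}).toReal) ∂P₁) := by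
  classical
  set Z₂v : Ω → (Fin M₂ → β) := fun ω j => Z₂ j ω with hZ₂v
  have hmv : Measurable Z₂v := measurable_pi_iff.mpr hm₂
  set ν : Measure (Fin M₂ → β) := μ.map Z₂v with hν
  have hνprob : IsProbabilityMeasure ν := Measure.isProbabilityMeasure_map hmv.aemeasurable
  set B : Set (α × (Fin M₂ → β)) := {p | ∃ j, (p.1, p.2 j) ∈ A} with hB
  have hBm : MeasurableSet B := by
    have hBeq : B = ⋃ j, (fun p : α × (Fin M₂ → β) => (p.1, p.2 j)) ⁻¹' A := by
      ext p; simp [hB]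
    rw [hBeq]
    exact MeasurableSet.iUnion fun j =>
      (measurable_fst.prodMk ((measurable_pi_apply j).comp measurable_snd)) hA
  have hslicem : ∀ z₁ : α, MeasurableSet {z₂ | (z₁, z₂) ∈ A} :=
    fun z₁ => measurable_prodMk_left hA
  set g : α → ℝ≥0∞ := fun z₁ => min 1 ((M₂ : ℝ≥0∞) * P₂ {z₂ | (z₁, z₂) ∈ A}) with hg
  have hgm : Measurable g :=
    measurable_const.min (measurable_const.mul (measurable_measure_prodMk_left hA))
  have hslice : ∀ z₁ : α, ν (Prod.mk z₁ ⁻¹' B) ≤ g z₁ := by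
    intro z₁
    refine le_min prob_le_one ?_
    have he : Prod.mk z₁ ⁻¹' B = ⋃ j, (fun f : Fin M₂ → β => f j) ⁻¹' {z₂ | (z₁, z₂) ∈ A} := by
      ext f; simp [hB]
    rw [he]
    calc ν (⋃ j, (fun f : Fin M₂ → β => f j) ⁻¹' {z₂ | (z₁, z₂) ∈ A})
        ≤ ∑ j : Fin M₂, ν ((fun f : Fin M₂ → β => f j) ⁻¹' {z₂ | (z₁, z₂) ∈ A}) :=
          measure_iUnion_fintype_le _ _
      _ = ∑ _j : Fin M₂, P₂ {z₂ | (z₁, z₂) ∈ A} := by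
          refine Finset.sum_congr rfl fun j _ => ?_
          rw [hν, ← Measure.map_apply (measurable_pi_apply j) (hslicem z₁),
            Measure.map_map (measurable_pi_apply j) hmv]
          have : (fun f : Fin M₂ → β => f j) ∘ Z₂v = Z₂ j := rfl
          rw [this, hid₂ j]
      _ = (M₂ : ℝ≥0∞) * P₂ {z₂ | (z₁, z₂) ∈ A} := by
          simp [Finset.sum_const, mul_comm]
  set L : ℝ≥0∞ := ∫⁻ z₁, g z₁ ∂P₁ with hL
  have hL1 : L ≤ 1 := by
    calc L ≤ ∫⁻ _, 1 ∂P₁ := lintegral_mono fun z => min_le_left _ _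
      _ = 1 := by simp
  have hLtop : L ≠ ⊤ := (hL1.trans_lt ENNReal.one_lt_top).ne
  -- per-index bound
  have hEi : ∀ i : Fin M₁, μ {ω | ∃ j, (Z₁ i ω, Z₂ j ω) ∈ A} ≤ L := by
    intro i
    have hind_i : IndepFun (Z₁ i) Z₂v μ := hindep.comp (measurable_pi_apply i) measurable_id
    have hmap : μ.map (fun ω => (Z₁ i ω, Z₂v ω)) = (μ.map (Z₁ i)).prod ν :=
      (indepFun_iff_map_prod_eq_prod_map_map (hm₁ i).aemeasurable hmv.aemeasurable).mp hind_i
    have hEv : {ω | ∃ j, (Z₁ i ω, Z₂ j ω) ∈ A} = (fun ω => (Z₁ i ω, Z₂v ω)) ⁻¹' B := by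
      ext ω; simp [hB, hZ₂v]
    rw [hEv, ← Measure.map_apply ((hm₁ i).prodMk hmv) hBm, hmap, hid₁ i,
      Measure.prod_apply hBm]
    exact lintegral_mono hslice
  have hmain : μ {ω | ∃ i j, (Z₁ i ω, Z₂ j ω) ∈ A} ≤ (M₁ : ℝ≥0∞) * L := by
    have hU : {ω | ∃ i j, (Z₁ i ω, Z₂ j ω) ∈ A}
        = ⋃ i, {ω | ∃ j, (Z₁ i ω, Z₂ j ω) ∈ A} := by ext ω; simp
    rw [hU]
    calc μ (⋃ i, {ω | ∃ j, (Z₁ i ω, Z₂ j ω) ∈ A})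
        ≤ ∑ i : Fin M₁, μ {ω | ∃ j, (Z₁ i ω, Z₂ j ω) ∈ A} := measure_iUnion_fintype_le _ _
      _ ≤ ∑ _i : Fin M₁, L := Finset.sum_le_sum fun i _ => hEi i
      _ = (M₁ : ℝ≥0∞) * L := by simp [Finset.sum_const, mul_comm]
  -- identify the real integral with L.toReal
  have hI : (∫ z₁, min 1 ((M₂ : ℝ) * (P₂ {z₂ | (z₁, z₂) ∈ A}).toReal) ∂P₁) = L.toReal := by
    rw [hL, ← integral_toReal hgm.aemeasurable
      (Filter.Eventually.of_forall fun z =>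
        lt_of_le_of_lt (min_le_left _ _) ENNReal.one_lt_top)]
    refine integral_congr_ae (Filter.Eventually.of_forall fun z => ?_)
    dsimp only
    rw [ENNReal.toReal_min ENNReal.one_ne_top
      (ENNReal.mul_ne_top (ENNReal.natCast_ne_top M₂) (measure_ne_top _ _)),
      ENNReal.toReal_mul]
    simp
  rw [hI]
  refine le_min ?_ ?_
  · calc (μ {ω | ∃ i j, (Z₁ i ω, Z₂ j ω) ∈ A}).toReal
        ≤ (1 : ℝ≥0∞).toReal := ENNReal.toReal_mono ENNReal.one_ne_top prob_le_one
      _ = 1 := ENNReal.toReal_one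
  · calc (μ {ω | ∃ i j, (Z₁ i ω, Z₂ j ω) ∈ A}).toReal
        ≤ ((M₁ : ℝ≥0∞) * L).toReal :=
          ENNReal.toReal_mono (ENNReal.mul_ne_top (ENNReal.natCast_ne_top M₁) hLtop) hmain
      _ = (M₁ : ℝ) * L.toReal := by rw [ENNReal.toReal_mul]; simp
end

section
/- Let Z_1(1),...,Z_1(M_1) and Z_2(1),...,Z_2(M_2) be two independent sequences, each consisting of pairwise independent identically distributed random variables with laws P_{Z_1} and P_{Z_2} respectively. Then for any measurable set A ⊆ Z_1 × Z_2, ℙ[⋃_{i,j} {(Z_1(i), Z_2(j)) ∈ A}] ≥ (1/4) min{1, M_1 p²/p_{12}, M_2 p²/p_{21}, M_1 M_2 p}, where p = ℙ[(Z_1,Z_2) ∈ A], p_{12} = ℙ[(Z_1,Z_2) ∈ A and (Z_1,Z_2') ∈ A], p_{21} = ℙ[(Z_1,Z_2) ∈ A and (Z_1',Z_2) ∈ A], with Z_1, Z_1' i.i.d. ~ P_{Z_1} and Z_2, Z_2' i.i.d. ~ P_{Z_2}, all mutually independent. -/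
open MeasureTheory ProbabilityTheory
open scoped ENNReal

/-- Map of a pair of independent random variables is the product of the maps. -/
lemma union_double_lower_map_pair {Ω γ δ : Type*} [MeasurableSpace Ω] [MeasurableSpace γ]
    [MeasurableSpace δ] (μ : Measure Ω) [IsProbabilityMeasure μ] {f : Ω → γ} {g : Ω → δ}
    (hf : Measurable f) (hg : Measurable g) (h : IndepFun f g μ) :
    μ.map (fun ω => (f ω, g ω)) = (μ.map f).prod (μ.map g) :=
  (indepFun_iff_map_prod_eq_prod_map_map hf.aemeasurable hg.aemeasurable).mp h

/-- Cauchy–Schwarz / second moment lower bound on the measure of the support. -/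
lemma union_double_lower_sq_lintegral {Ω : Type*} [MeasurableSpace Ω] (μ : Measure Ω)
    (f : Ω → ℝ≥0∞) (hf : Measurable f) (S : Set Ω) (hS : MeasurableSet S)
    (h0 : ∀ ω, ω ∉ S → f ω = 0) :
    (∫⁻ ω, f ω ∂μ) ^ 2 ≤ (∫⁻ ω, (f ω) ^ 2 ∂μ) * μ S := by
  set g : Ω → ℝ≥0∞ := S.indicator 1 with hg
  have hgm : Measurable g := measurable_one.indicator hS
  have hfg : ∀ ω, (f * g) ω = f ω := by
    intro ω
    by_cases h : ω ∈ S
    · simp [hg, Set.indicator_of_mem h]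
    · simp [hg, Set.indicator_of_notMem h, h0 ω h]
  have hpq : Real.HolderConjugate 2 2 := Real.holderConjugate_iff.mpr ⟨one_lt_two, by norm_num⟩
  have key := ENNReal.lintegral_mul_le_Lp_mul_Lq μ hpq hf.aemeasurable hgm.aemeasurable
  simp_rw [hfg] at key
  have hgpow : ∀ ω, g ω ^ (2:ℝ) = g ω := by
    intro ω
    by_cases h : ω ∈ S <;> simp [hg, Set.indicator_of_mem, Set.indicator_of_notMem, h]
  simp_rw [hgpow] at key
  have hgint : ∫⁻ ω, g ω ∂μ = μ S := by
    rw [hg, lintegral_indicator hS]; simp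
  rw [hgint] at key
  have hfpow : ∀ ω, f ω ^ (2:ℝ) = f ω ^ 2 := fun ω => by
    rw [← ENNReal.rpow_natCast (f ω) 2]; norm_num
  simp_rw [hfpow] at key
  calc (∫⁻ ω, f ω ∂μ) ^ 2
      ≤ ((∫⁻ ω, f ω ^ 2 ∂μ) ^ (1/2:ℝ) * (μ S) ^ (1/2:ℝ)) ^ 2 := pow_le_pow_left' key 2
    _ = (∫⁻ ω, f ω ^ 2 ∂μ) * μ S := by
        rw [mul_pow, ← ENNReal.rpow_natCast ((∫⁻ ω, f ω ^ 2 ∂μ) ^ (1/2:ℝ)) 2,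
          ← ENNReal.rpow_natCast ((μ S) ^ (1/2:ℝ)) 2, ← ENNReal.rpow_mul, ← ENNReal.rpow_mul]
        norm_num

/-- The doubly-crossed set has product-squared measure. -/
lemma union_double_lower_cross {α β : Type*} [MeasurableSpace α] [MeasurableSpace β]
    (P₁ : Measure α) (P₂ : Measure β) [IsProbabilityMeasure P₁] [IsProbabilityMeasure P₂]
    (A : Set (α × β)) (hA : MeasurableSet A) :
    ((P₁.prod P₁).prod (P₂.prod P₂))
      {x : (α × α) × (β × β) | (x.1.1, x.2.1) ∈ A ∧ (x.1.2, x.2.2) ∈ A}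
      = (P₁.prod P₂) A * (P₁.prod P₂) A := by
  have hC : MeasurableSet {x : (α × α) × (β × β) | (x.1.1, x.2.1) ∈ A ∧ (x.1.2, x.2.2) ∈ A} :=
    ((measurable_fst.fst.prodMk measurable_snd.fst) hA).inter
      ((measurable_fst.snd.prodMk measurable_snd.snd) hA)
  rw [Measure.prod_apply hC]
  have hsec : ∀ xy : α × α,
      (Prod.mk xy ⁻¹' {x : (α × α) × (β × β) | (x.1.1, x.2.1) ∈ A ∧ (x.1.2, x.2.2) ∈ A})
        = (Prod.mk xy.1 ⁻¹' A) ×ˢ (Prod.mk xy.2 ⁻¹' A) := by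
    intro xy; ext uv; simp [Set.mem_prod]
  simp_rw [hsec, Measure.prod_prod]
  have hg : Measurable fun x : α => P₂ (Prod.mk x ⁻¹' A) := measurable_measure_prodMk_left hA
  rw [show (fun xy : α × α => P₂ (Prod.mk xy.1 ⁻¹' A) * P₂ (Prod.mk xy.2 ⁻¹' A))
      = fun xy : α × α => (fun x => P₂ (Prod.mk x ⁻¹' A)) xy.1
          * (fun x => P₂ (Prod.mk x ⁻¹' A)) xy.2 from rfl,
    lintegral_prod_mul hg.aemeasurable hg.aemeasurable, ← Measure.prod_apply hA]

/-- Final real-number arithmetic. -/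
lemma union_double_lower_final (m1 m2 p p12 p21 m : ℝ) (hm1 : 0 < m1) (hm2 : 0 < m2)
    (hp : 0 < p) (h12 : 0 < p12) (h21 : 0 < p21)
    (key : (m1*m2*p)^2 ≤ m1*m2*(p + m2*p12 + m1*p21 + m1*m2*p^2)*m) :
    (1/4) * min 1 (min (m1*p^2/p12) (min (m2*p^2/p21) (m1*m2*p))) ≤ m := by
  set D := p + m2*p12 + m1*p21 + m1*m2*p^2 with hD
  set T := max p (max (m2*p12) (max (m1*p21) (m1*m2*p^2))) with hT
  have hTpos : 0 < T := lt_of_lt_of_le hp (le_max_left _ _)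
  have hkey2 : m1*m2*p^2 ≤ D*m := by
    have hpos : 0 < m1*m2 := mul_pos hm1 hm2
    nlinarith [sq_nonneg (m1*m2)]
  have hDT : D ≤ 4*T := by
    have h1 : p ≤ T := le_max_left _ _
    have h2 : m2*p12 ≤ T := le_trans (le_max_left _ _) (le_max_right _ _)
    have h3 : m1*p21 ≤ T :=
      le_trans (le_trans (le_max_left _ _) (le_max_right _ _)) (le_max_right _ _)
    have h4 : m1*m2*p^2 ≤ T :=
      le_trans (le_trans (le_max_right _ _) (le_max_right _ _)) (le_max_right _ _)
    linarith
  have hDpos : 0 < D := by rw [hD]; positivity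
  have hm0 : 0 ≤ m := by nlinarith [mul_pos (mul_pos hm1 hm2) (pow_pos hp 2)]
  have hkey3 : m1*m2*p^2 ≤ 4*T*m := le_trans hkey2 (by nlinarith)
  have hmin : min 1 (min (m1*p^2/p12) (min (m2*p^2/p21) (m1*m2*p))) ≤ m1*m2*p^2/T := by
    rcases max_choice p (max (m2*p12) (max (m1*p21) (m1*m2*p^2))) with h | h
    · rw [hT, h]
      refine le_trans (le_trans (min_le_right _ _)
        (le_trans (min_le_right _ _) (min_le_right _ _))) ?_
      rw [le_div_iff₀ hp]; ring_nf; exact le_refl _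
    · rw [hT, h]
      rcases max_choice (m2*p12) (max (m1*p21) (m1*m2*p^2)) with h' | h'
      · rw [h']
        refine le_trans (le_trans (min_le_right _ _) (min_le_left _ _)) ?_
        rw [div_le_div_iff₀ h12 (mul_pos hm2 h12)]; ring_nf; exact le_refl _
      · rw [h']
        rcases max_choice (m1*p21) (m1*m2*p^2) with h'' | h''
        · rw [h'']
          refine le_trans (le_trans (min_le_right _ _)
            (le_trans (min_le_right _ _) (min_le_left _ _))) ?_
          rw [div_le_div_iff₀ h21 (mul_pos hm1 h21)]; ring_nf; exact le_refl _
        · rw [h'']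
          refine le_trans (min_le_left _ _) ?_
          rw [le_div_iff₀ (by positivity)]; ring_nf; exact le_refl _
  calc (1/4) * min 1 (min (m1*p^2/p12) (min (m2*p^2/p21) (m1*m2*p)))
      ≤ (1/4) * (m1*m2*p^2/T) := by linarith [hmin]
    _ = m1*m2*p^2/(4*T) := by ring
    _ ≤ m := by rw [div_le_iff₀ (by positivity)]; nlinarith

/-- Lower bound on the probability of a doubly-indexed union via de Caen's inequality:
with two independent sequences, each pairwise independent and identically distributed,
`ℙ[⋃_{i,j} {(Z₁(i),Z₂(j)) ∈ A}] ≥ (1/4) min{1, M₁ p²/p₁₂, M₂ p²/p₂₁, M₁ M₂ p}`. -/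
theorem union_double_lower {Ω α β : Type*} [MeasurableSpace Ω] [MeasurableSpace α]
    [MeasurableSpace β] (μ : Measure Ω) [IsProbabilityMeasure μ] {M₁ M₂ : ℕ}
    (Z₁ : Fin M₁ → Ω → α) (Z₂ : Fin M₂ → Ω → β)
    (P₁ : Measure α) (P₂ : Measure β) [IsProbabilityMeasure P₁] [IsProbabilityMeasure P₂]
    (hm₁ : ∀ i, Measurable (Z₁ i)) (hm₂ : ∀ j, Measurable (Z₂ j))
    (hid₁ : ∀ i, μ.map (Z₁ i) = P₁) (hid₂ : ∀ j, μ.map (Z₂ j) = P₂)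
    (hpi₁ : ∀ i i', i ≠ i' → IndepFun (Z₁ i) (Z₁ i') μ)
    (hpi₂ : ∀ j j', j ≠ j' → IndepFun (Z₂ j) (Z₂ j') μ)
    (hindep : IndepFun (fun ω i => Z₁ i ω) (fun ω j => Z₂ j ω) μ)
    (A : Set (α × β)) (hA : MeasurableSet A)
    (p p₁₂ p₂₁ : ℝ)
    (hp : p = ((P₁.prod P₂) A).toReal)
    (hp₁₂ : p₁₂ = ((P₁.prod (P₂.prod P₂))
      {x : α × β × β | (x.1, x.2.1) ∈ A ∧ (x.1, x.2.2) ∈ A}).toReal)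
    (hp₂₁ : p₂₁ = (((P₁.prod P₁).prod P₂)
      {x : (α × α) × β | (x.1.1, x.2) ∈ A ∧ (x.1.2, x.2) ∈ A}).toReal) :
    (1 / 4) * min 1 (min ((M₁ : ℝ) * p ^ 2 / p₁₂)
        (min ((M₂ : ℝ) * p ^ 2 / p₂₁) ((M₁ : ℝ) * (M₂ : ℝ) * p)))
      ≤ (μ {ω | ∃ i j, (Z₁ i ω, Z₂ j ω) ∈ A}).toReal := by
  -- trivial case: the min is nonpositive
  rcases le_or_gt (min 1 (min ((M₁ : ℝ) * p ^ 2 / p₁₂)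
      (min ((M₂ : ℝ) * p ^ 2 / p₂₁) ((M₁ : ℝ) * (M₂ : ℝ) * p)))) 0 with hneg | hpos
  · exact le_trans (mul_nonpos_of_nonneg_of_nonpos (by norm_num) hneg) ENNReal.toReal_nonneg
  -- positivity of all quantities
  have hple : 0 ≤ p := hp ▸ ENNReal.toReal_nonneg
  have hNppos : 0 < (M₁ : ℝ) * (M₂ : ℝ) * p :=
    lt_of_lt_of_le hpos (le_trans (min_le_right _ _) (le_trans (min_le_right _ _)
      (min_le_right _ _)))
  have hM₁pos : 0 < (M₁ : ℝ) := by
    rcases Nat.eq_zero_or_pos M₁ with h | h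
    · subst h; simp at hNppos
    · exact_mod_cast h
  have hM₂pos : 0 < (M₂ : ℝ) := by
    rcases Nat.eq_zero_or_pos M₂ with h | h
    · subst h; simp at hNppos
    · exact_mod_cast h
  have hppos : 0 < p := by
    by_contra h
    push_neg at h
    nlinarith [mul_pos hM₁pos hM₂pos]
  have hp12pos : 0 < p₁₂ := by
    rcases lt_or_eq_of_le (hp₁₂ ▸ ENNReal.toReal_nonneg : (0:ℝ) ≤ p₁₂) with h | h
    · exact h
    · exfalso
      have : (M₁ : ℝ) * p ^ 2 / p₁₂ = 0 := by rw [← h, div_zero]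
      have h2 := lt_of_lt_of_le hpos (le_trans (min_le_right _ _) (min_le_left _ _))
      rw [this] at h2; exact lt_irrefl 0 h2
  have hp21pos : 0 < p₂₁ := by
    rcases lt_or_eq_of_le (hp₂₁ ▸ ENNReal.toReal_nonneg : (0:ℝ) ≤ p₂₁) with h | h
    · exact h
    · exfalso
      have : (M₂ : ℝ) * p ^ 2 / p₂₁ = 0 := by rw [← h, div_zero]
      have h2 := lt_of_lt_of_le hpos (le_trans (min_le_right _ _)
        (le_trans (min_le_right _ _) (min_le_left _ _)))
      rw [this] at h2; exact lt_irrefl 0 h2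
  -- notation
  set a : ℝ≥0∞ := (P₁.prod P₂) A with ha
  set b : ℝ≥0∞ := (P₁.prod (P₂.prod P₂))
    {x : α × β × β | (x.1, x.2.1) ∈ A ∧ (x.1, x.2.2) ∈ A} with hbdef
  set c : ℝ≥0∞ := ((P₁.prod P₁).prod P₂)
    {x : (α × α) × β | (x.1.1, x.2) ∈ A ∧ (x.1.2, x.2) ∈ A} with hcdef
  set E : Fin M₁ → Fin M₂ → Set Ω := fun i j => (fun ω => (Z₁ i ω, Z₂ j ω)) ⁻¹' A with hE
  have hEmeas : ∀ i j, MeasurableSet (E i j) := fun i j => ((hm₁ i).prodMk (hm₂ j)) hA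
  -- the four intersection probability computations
  have hμE : ∀ i j, μ (E i j) = a := by
    intro i j
    rw [hE, ← Measure.map_apply ((hm₁ i).prodMk (hm₂ j)) hA,
      union_double_lower_map_pair μ (hm₁ i) (hm₂ j)
        (hindep.comp (measurable_pi_apply i) (measurable_pi_apply j)), hid₁, hid₂]
  have hμb : ∀ (i : Fin M₁) (j l : Fin M₂), j ≠ l → μ (E i j ∩ E i l) = b := by
    intro i j l hjl
    have hBm : MeasurableSet {x : α × β × β | (x.1, x.2.1) ∈ A ∧ (x.1, x.2.2) ∈ A} :=
      ((measurable_fst.prodMk measurable_snd.fst) hA).inter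
        ((measurable_fst.prodMk measurable_snd.snd) hA)
    have hpre : E i j ∩ E i l = (fun ω => (Z₁ i ω, (Z₂ j ω, Z₂ l ω))) ⁻¹'
        {x : α × β × β | (x.1, x.2.1) ∈ A ∧ (x.1, x.2.2) ∈ A} := by
      ext ω; simp [hE, Set.mem_inter_iff]
    rw [hpre, ← Measure.map_apply ((hm₁ i).prodMk ((hm₂ j).prodMk (hm₂ l))) hBm,
      union_double_lower_map_pair μ (hm₁ i) ((hm₂ j).prodMk (hm₂ l))
        (hindep.comp (measurable_pi_apply i)
          ((measurable_pi_apply j).prodMk (measurable_pi_apply l))),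
      hid₁, union_double_lower_map_pair μ (hm₂ j) (hm₂ l) (hpi₂ j l hjl), hid₂, hid₂]
  have hμc : ∀ (i k : Fin M₁) (j : Fin M₂), i ≠ k → μ (E i j ∩ E k j) = c := by
    intro i k j hik
    have hCm : MeasurableSet {x : (α × α) × β | (x.1.1, x.2) ∈ A ∧ (x.1.2, x.2) ∈ A} :=
      ((measurable_fst.fst.prodMk measurable_snd) hA).inter
        ((measurable_fst.snd.prodMk measurable_snd) hA)
    have hpre : E i j ∩ E k j = (fun ω => ((Z₁ i ω, Z₁ k ω), Z₂ j ω)) ⁻¹'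
        {x : (α × α) × β | (x.1.1, x.2) ∈ A ∧ (x.1.2, x.2) ∈ A} := by
      ext ω; simp [hE, Set.mem_inter_iff]
    rw [hpre, ← Measure.map_apply (((hm₁ i).prodMk (hm₁ k)).prodMk (hm₂ j)) hCm,
      union_double_lower_map_pair μ ((hm₁ i).prodMk (hm₁ k)) (hm₂ j)
        (hindep.comp ((measurable_pi_apply i).prodMk (measurable_pi_apply k))
          (measurable_pi_apply j)),
      union_double_lower_map_pair μ (hm₁ i) (hm₁ k) (hpi₁ i k hik), hid₁, hid₁, hid₂]
  have hμa2 : ∀ (i k : Fin M₁) (j l : Fin M₂), i ≠ k → j ≠ l →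
      μ (E i j ∩ E k l) = a * a := by
    intro i k j l hik hjl
    have hDm : MeasurableSet
        {x : (α × α) × (β × β) | (x.1.1, x.2.1) ∈ A ∧ (x.1.2, x.2.2) ∈ A} :=
      ((measurable_fst.fst.prodMk measurable_snd.fst) hA).inter
        ((measurable_fst.snd.prodMk measurable_snd.snd) hA)
    have hpre : E i j ∩ E k l = (fun ω => ((Z₁ i ω, Z₁ k ω), (Z₂ j ω, Z₂ l ω))) ⁻¹'
        {x : (α × α) × (β × β) | (x.1.1, x.2.1) ∈ A ∧ (x.1.2, x.2.2) ∈ A} := by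
      ext ω; simp [hE, Set.mem_inter_iff]
    rw [hpre, ← Measure.map_apply
        (((hm₁ i).prodMk (hm₁ k)).prodMk ((hm₂ j).prodMk (hm₂ l))) hDm,
      union_double_lower_map_pair μ ((hm₁ i).prodMk (hm₁ k)) ((hm₂ j).prodMk (hm₂ l))
        (hindep.comp ((measurable_pi_apply i).prodMk (measurable_pi_apply k))
          ((measurable_pi_apply j).prodMk (measurable_pi_apply l))),
      union_double_lower_map_pair μ (hm₁ i) (hm₁ k) (hpi₁ i k hik),
      union_double_lower_map_pair μ (hm₂ j) (hm₂ l) (hpi₂ j l hjl),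
      hid₁, hid₁, hid₂, hid₂, union_double_lower_cross P₁ P₂ A hA, ha]
  -- the counting function
  set F : Ω → ℝ≥0∞ := fun ω => ∑ q : Fin M₁ × Fin M₂, (E q.1 q.2).indicator 1 ω with hF
  have hFmeas : Measurable F :=
    Finset.measurable_sum _ fun q _ => measurable_one.indicator (hEmeas q.1 q.2)
  set N : ℝ≥0∞ := ((M₁ * M₂ : ℕ) : ℝ≥0∞) with hN
  -- first moment
  have hI1 : ∫⁻ ω, F ω ∂μ = N * a := by
    rw [hF, lintegral_finset_sum _ fun q _ => measurable_one.indicator (hEmeas q.1 q.2)]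
    have : ∀ q : Fin M₁ × Fin M₂, ∫⁻ ω, (E q.1 q.2).indicator 1 ω ∂μ = a := fun q => by
      rw [lintegral_indicator (hEmeas q.1 q.2)]; simp [hμE]
    rw [Finset.sum_congr rfl fun q _ => this q]
    simp [hN, Finset.card_univ, mul_comm]
  -- second moment
  set Dtot : ℝ≥0∞ := a + (M₂ : ℝ≥0∞) * b + (M₁ : ℝ≥0∞) * c + N * (a * a) with hDtot
  have hI2 : ∫⁻ ω, (F ω) ^ 2 ∂μ ≤ N * Dtot := by
    have hsq : ∀ ω, (F ω) ^ 2 = ∑ q : Fin M₁ × Fin M₂, ∑ r : Fin M₁ × Fin M₂,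
        (E q.1 q.2 ∩ E r.1 r.2).indicator 1 ω := by
      intro ω
      rw [hF, pow_two, Finset.sum_mul_sum]
      exact Finset.sum_congr rfl fun q _ => Finset.sum_congr rfl fun r _ => by
        rw [Set.inter_indicator_one]; rfl
    simp_rw [hsq]
    rw [lintegral_finset_sum _ fun q _ => Finset.measurable_sum _ fun r _ =>
      measurable_one.indicator ((hEmeas q.1 q.2).inter (hEmeas r.1 r.2))]
    have hrow : ∀ q : Fin M₁ × Fin M₂,
        ∫⁻ ω, ∑ r : Fin M₁ × Fin M₂, (E q.1 q.2 ∩ E r.1 r.2).indicator 1 ω ∂μ ≤ Dtot := by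
      intro q
      rw [lintegral_finset_sum _ fun r _ =>
        measurable_one.indicator ((hEmeas q.1 q.2).inter (hEmeas r.1 r.2))]
      have hterm : ∀ r : Fin M₁ × Fin M₂,
          ∫⁻ ω, (E q.1 q.2 ∩ E r.1 r.2).indicator 1 ω ∂μ = μ (E q.1 q.2 ∩ E r.1 r.2) := by
        intro r
        rw [lintegral_indicator ((hEmeas q.1 q.2).inter (hEmeas r.1 r.2))]; simp
      rw [Finset.sum_congr rfl fun r _ => hterm r]
      have hbound : ∀ r : Fin M₁ × Fin M₂, μ (E q.1 q.2 ∩ E r.1 r.2) ≤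
          (if q = r then a else 0) + (if q.1 = r.1 then b else 0)
            + (if q.2 = r.2 then c else 0) + a * a := by
        intro r
        by_cases h1 : q.1 = r.1 <;> by_cases h2 : q.2 = r.2
        · have hqr : q = r := Prod.ext h1 h2
          subst hqr
          simp only [if_pos rfl]
          rw [Set.inter_self, hμE]
          exact le_self_add.trans (le_self_add.trans le_self_add)
        · have hqr : q ≠ r := fun h => h2 (by rw [h])
          rw [← h1, hμb q.1 q.2 r.2 h2]
          simp only [if_pos rfl, if_neg hqr, if_neg h2, zero_add]
          exact le_self_add.trans le_self_add
        · have hqr : q ≠ r := fun h => h1 (by rw [h])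
          rw [← h2, hμc q.1 r.1 q.2 h1]
          simp only [if_pos rfl, if_neg hqr, if_neg h1, zero_add]
          exact le_self_add
        · have hqr : q ≠ r := fun h => h1 (by rw [h])
          rw [hμa2 q.1 r.1 q.2 r.2 h1 h2]
          simp only [if_neg hqr, if_neg h1, if_neg h2, zero_add]
          exact le_rfl
      calc ∑ r : Fin M₁ × Fin M₂, μ (E q.1 q.2 ∩ E r.1 r.2)
          ≤ ∑ r : Fin M₁ × Fin M₂, ((if q = r then a else 0) + (if q.1 = r.1 then b else 0)
              + (if q.2 = r.2 then c else 0) + a * a) :=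
            Finset.sum_le_sum fun r _ => hbound r
        _ = Dtot := by
            rw [Finset.sum_add_distrib, Finset.sum_add_distrib, Finset.sum_add_distrib]
            have s1 : ∑ r : Fin M₁ × Fin M₂, (if q = r then a else 0) = a := by
              simp [Finset.sum_ite_eq]
            have s2 : ∑ r : Fin M₁ × Fin M₂, (if q.1 = r.1 then b else 0)
                = (M₂ : ℝ≥0∞) * b := by
              rw [Fintype.sum_prod_type, Finset.sum_comm]
              simp [Finset.sum_ite_eq, Finset.card_univ, mul_comm]
            have s3 : ∑ r : Fin M₁ × Fin M₂, (if q.2 = r.2 then c else 0)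
                = (M₁ : ℝ≥0∞) * c := by
              rw [Fintype.sum_prod_type]
              simp [Finset.sum_ite_eq, Finset.card_univ, mul_comm]
            have s4 : ∑ _r : Fin M₁ × Fin M₂, a * a = N * (a * a) := by
              simp [hN, Finset.card_univ, mul_comm]
            rw [s1, s2, s3, s4, hDtot]
    calc ∑ q : Fin M₁ × Fin M₂,
          ∫⁻ ω, ∑ r : Fin M₁ × Fin M₂, (E q.1 q.2 ∩ E r.1 r.2).indicator 1 ω ∂μ
        ≤ ∑ _q : Fin M₁ × Fin M₂, Dtot := Finset.sum_le_sum fun q _ => hrow q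
      _ = N * Dtot := by simp [hN, Finset.card_univ, mul_comm]
  -- the union
  set S : Set Ω := {ω | ∃ i j, (Z₁ i ω, Z₂ j ω) ∈ A} with hS
  have hSmeas : MeasurableSet S := by
    have : S = ⋃ i, ⋃ j, E i j := by
      ext ω; simp [hS, hE]
    rw [this]
    exact MeasurableSet.iUnion fun i => MeasurableSet.iUnion fun j => hEmeas i j
  have hFzero : ∀ ω, ω ∉ S → F ω = 0 := by
    intro ω hω
    rw [hF]
    refine Finset.sum_eq_zero fun q _ => ?_
    have : ω ∉ E q.1 q.2 := fun h => hω ⟨q.1, q.2, h⟩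
    simp [Set.indicator_of_notMem this]
  -- Cauchy–Schwarz
  have hCS : (N * a) ^ 2 ≤ N * Dtot * μ S := by
    calc (N * a) ^ 2 = (∫⁻ ω, F ω ∂μ) ^ 2 := by rw [hI1]
      _ ≤ (∫⁻ ω, (F ω) ^ 2 ∂μ) * μ S :=
          union_double_lower_sq_lintegral μ F hFmeas S hSmeas hFzero
      _ ≤ N * Dtot * μ S := mul_le_mul_left hI2 _
  -- convert to reals
  have hane : a ≠ ⊤ := measure_ne_top _ _
  have hbne : b ≠ ⊤ := measure_ne_top _ _
  have hcne : c ≠ ⊤ := measure_ne_top _ _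
  have hSne : μ S ≠ ⊤ := measure_ne_top _ _
  have hNne : N ≠ ⊤ := ENNReal.natCast_ne_top _
  have hDne : Dtot ≠ ⊤ := by
    rw [hDtot]
    exact ENNReal.add_ne_top.mpr ⟨ENNReal.add_ne_top.mpr ⟨ENNReal.add_ne_top.mpr
      ⟨hane, ENNReal.mul_ne_top (ENNReal.natCast_ne_top _) hbne⟩,
      ENNReal.mul_ne_top (ENNReal.natCast_ne_top _) hcne⟩,
      ENNReal.mul_ne_top hNne (ENNReal.mul_ne_top hane hane)⟩
  have hreal := ENNReal.toReal_mono
    (ENNReal.mul_ne_top (ENNReal.mul_ne_top hNne hDne) hSne) hCS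
  rw [ENNReal.toReal_pow, ENNReal.toReal_mul, ENNReal.toReal_mul, ENNReal.toReal_mul] at hreal
  have hNr : N.toReal = (M₁ : ℝ) * (M₂ : ℝ) := by
    rw [hN, ENNReal.toReal_natCast]; push_cast; ring
  have hDr : Dtot.toReal = p + (M₂ : ℝ) * p₁₂ + (M₁ : ℝ) * p₂₁
      + (M₁ : ℝ) * (M₂ : ℝ) * p ^ 2 := by
    rw [hDtot, ENNReal.toReal_add (ENNReal.add_ne_top.mpr ⟨ENNReal.add_ne_top.mpr
        ⟨hane, ENNReal.mul_ne_top (ENNReal.natCast_ne_top _) hbne⟩,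
        ENNReal.mul_ne_top (ENNReal.natCast_ne_top _) hcne⟩)
        (ENNReal.mul_ne_top hNne (ENNReal.mul_ne_top hane hane)),
      ENNReal.toReal_add (ENNReal.add_ne_top.mpr
        ⟨hane, ENNReal.mul_ne_top (ENNReal.natCast_ne_top _) hbne⟩)
        (ENNReal.mul_ne_top (ENNReal.natCast_ne_top _) hcne),
      ENNReal.toReal_add hane (ENNReal.mul_ne_top (ENNReal.natCast_ne_top _) hbne),
      ENNReal.toReal_mul, ENNReal.toReal_mul, ENNReal.toReal_mul, ENNReal.toReal_mul,
      ENNReal.toReal_natCast, ENNReal.toReal_natCast, hNr, ← hp, ← hp₁₂, ← hp₂₁]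
    ring
  rw [hNr, hDr, ← hp] at hreal
  exact union_double_lower_final (M₁ : ℝ) (M₂ : ℝ) p p₁₂ p₂₁ (μ S).toReal
    hM₁pos hM₂pos hppos hp12pos hp21pos hreal
end

section
/- Under the setup of the doubly-indexed union with pairwise independent sequences, if additionally ℙ[(z_1, Z_2) ∈ A] takes the same value for all z_1 in the projection A_1 of A onto the first coordinate, and ℙ[(Z_1, z_2) ∈ A] takes the same value for all z_2 in the projection A_2 onto the second coordinate, then ℙ[⋃_{i,j} {(Z_1(i), Z_2(j)) ∈ A}] ≥ (1/4) min{1, M_1 ℙ[Z_1 ∈ A_1], M_2 ℙ[Z_2 ∈ A_2], M_1 M_2 ℙ[(Z_1, Z_2) ∈ A]}. -/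
open MeasureTheory ProbabilityTheory
open scoped ENNReal

/-- Lower bound for the doubly-indexed union in terms of the projections of `A`:
if the slice probabilities are constant on each projection, then
`ℙ[⋃_{i,j} {(Z₁(i),Z₂(j)) ∈ A}] ≥ (1/4) min{1, M₁ P₁(A₁), M₂ P₂(A₂), M₁ M₂ P(A)}`. -/
theorem union_double_lower_proj {Ω α β : Type*} [MeasurableSpace Ω] [MeasurableSpace α]
    [MeasurableSpace β] (μ : Measure Ω) [IsProbabilityMeasure μ] {M₁ M₂ : ℕ}
    (Z₁ : Fin M₁ → Ω → α) (Z₂ : Fin M₂ → Ω → β)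
    (P₁ : Measure α) (P₂ : Measure β) [IsProbabilityMeasure P₁] [IsProbabilityMeasure P₂]
    (hm₁ : ∀ i, Measurable (Z₁ i)) (hm₂ : ∀ j, Measurable (Z₂ j))
    (hid₁ : ∀ i, μ.map (Z₁ i) = P₁) (hid₂ : ∀ j, μ.map (Z₂ j) = P₂)
    (hpi₁ : ∀ i i', i ≠ i' → IndepFun (Z₁ i) (Z₁ i') μ)
    (hpi₂ : ∀ j j', j ≠ j' → IndepFun (Z₂ j) (Z₂ j') μ)
    (hindep : IndepFun (fun ω i => Z₁ i ω) (fun ω j => Z₂ j ω) μ)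
    (A : Set (α × β)) (hA : MeasurableSet A)
    (A₁ : Set α) (hA₁def : A₁ = {z₁ | ∃ z₂, (z₁, z₂) ∈ A}) (hA₁m : MeasurableSet A₁)
    (A₂ : Set β) (hA₂def : A₂ = {z₂ | ∃ z₁, (z₁, z₂) ∈ A}) (hA₂m : MeasurableSet A₂)
    (hconst₁ : ∀ z₁ ∈ A₁, ∀ z₁' ∈ A₁,
      P₂ {z₂ | (z₁, z₂) ∈ A} = P₂ {z₂ | (z₁', z₂) ∈ A})
    (hconst₂ : ∀ z₂ ∈ A₂, ∀ z₂' ∈ A₂,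
      P₁ {z₁ | (z₁, z₂) ∈ A} = P₁ {z₁ | (z₁, z₂') ∈ A}) :
    (1 / 4) * min 1 (min ((M₁ : ℝ) * (P₁ A₁).toReal)
        (min ((M₂ : ℝ) * (P₂ A₂).toReal)
          ((M₁ : ℝ) * (M₂ : ℝ) * ((P₁.prod P₂) A).toReal)))
      ≤ (μ {ω | ∃ i j, (Z₁ i ω, Z₂ j ω) ∈ A}).toReal := by
  classical
  set aR : ℝ := (P₁ A₁).toReal with haR
  set bR : ℝ := (P₂ A₂).toReal with hbR
  set pR : ℝ := ((P₁.prod P₂) A).toReal with hpR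
  set t : ℝ := min 1 (min ((M₁ : ℝ) * aR) (min ((M₂ : ℝ) * bR) ((M₁ : ℝ) * (M₂ : ℝ) * pR)))
    with ht
  by_cases htriv : t ≤ 0
  · calc (1/4 : ℝ) * t ≤ 0 := by nlinarith
      _ ≤ _ := ENNReal.toReal_nonneg
  push_neg at htriv
  have ht1 : t ≤ 1 := min_le_left _ _
  have hta : t ≤ (M₁ : ℝ) * aR := le_trans (min_le_right _ _) (min_le_left _ _)
  have htb : t ≤ (M₂ : ℝ) * bR :=
    le_trans (min_le_right _ _) (le_trans (min_le_right _ _) (min_le_left _ _))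
  have htm : t ≤ (M₁ : ℝ) * (M₂ : ℝ) * pR :=
    le_trans (min_le_right _ _) (le_trans (min_le_right _ _) (min_le_right _ _))
  have haRpos : 0 < aR := by
    rcases mul_pos_iff.1 (lt_of_lt_of_le htriv hta) with h | h
    · exact h.2
    · exact absurd h.1 (not_lt.2 (Nat.cast_nonneg _))
  have hbRpos : 0 < bR := by
    rcases mul_pos_iff.1 (lt_of_lt_of_le htriv htb) with h | h
    · exact h.2
    · exact absurd h.1 (not_lt.2 (Nat.cast_nonneg _))
  have hmRpos : 0 < (M₁ : ℝ) * (M₂ : ℝ) * pR := lt_of_lt_of_le htriv htm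
  have hpRpos : 0 < pR := by
    rcases mul_pos_iff.1 hmRpos with h | h
    · exact h.2
    · exact absurd h.1 (not_lt.2 (mul_nonneg (Nat.cast_nonneg _) (Nat.cast_nonneg _)))
  -- slice functions
  set f : α → ℝ≥0∞ := fun x => P₂ (Prod.mk x ⁻¹' A) with hfdef
  have hfm : Measurable f := measurable_measure_prodMk_left hA
  have hf0 : ∀ x ∉ A₁, f x = 0 := by
    intro x hx
    have he : Prod.mk x ⁻¹' A = ∅ := by
      ext y; simp only [Set.mem_preimage, Set.mem_empty_iff_false, iff_false]
      intro hy; exact hx (hA₁def ▸ ⟨y, hy⟩)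
    simp [hfdef, he]
  have hPA1 : (P₁.prod P₂) A = ∫⁻ x, f x ∂P₁ := Measure.prod_apply hA
  have hA₁ne : P₁ A₁ ≠ 0 := by
    intro h0; rw [haR, h0, ENNReal.toReal_zero] at haRpos; exact lt_irrefl _ haRpos
  obtain ⟨x₀, hx₀A⟩ := nonempty_of_measure_ne_zero hA₁ne
  set c : ℝ≥0∞ := f x₀ with hcdef
  have hfconst : ∀ x ∈ A₁, f x = c := fun x hx => hconst₁ x hx x₀ hx₀A
  have hfind : f = A₁.indicator (fun _ => c) := by
    funext x
    by_cases hx : x ∈ A₁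
    · simp [Set.indicator_of_mem hx, hfconst x hx]
    · simp [Set.indicator_of_notMem hx, hf0 x hx]
  have hPAca : (P₁.prod P₂) A = c * P₁ A₁ := by
    rw [hPA1, hfind, lintegral_indicator hA₁m, setLIntegral_const]
  have hI2 : ∫⁻ x, f x ^ 2 ∂P₁ = c ^ 2 * P₁ A₁ := by
    have h2 : (fun x => f x ^ 2) = A₁.indicator (fun _ => c ^ 2) := by
      funext x
      by_cases hx : x ∈ A₁
      · simp [Set.indicator_of_mem hx, hfconst x hx]
      · simp [Set.indicator_of_notMem hx, hf0 x hx]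
    rw [h2, lintegral_indicator hA₁m, setLIntegral_const]
  have key1 : P₁ A₁ * ∫⁻ x, f x ^ 2 ∂P₁ = ((P₁.prod P₂) A) ^ 2 := by
    rw [hI2, hPAca]; ring
  -- second coordinate slices
  set g : β → ℝ≥0∞ := fun y => P₁ ((fun x => (x, y)) ⁻¹' A) with hgdef
  have hgm : Measurable g := measurable_measure_prodMk_right hA
  have hg0 : ∀ y ∉ A₂, g y = 0 := by
    intro y hy
    have he : ((fun x => (x, y)) ⁻¹' A) = ∅ := by
      ext x; simp only [Set.mem_preimage, Set.mem_empty_iff_false, iff_false]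
      intro hx; exact hy (hA₂def ▸ ⟨x, hx⟩)
    simp [hgdef, he]
  have hPA2 : (P₁.prod P₂) A = ∫⁻ y, g y ∂P₂ := Measure.prod_apply_symm hA
  have hA₂ne : P₂ A₂ ≠ 0 := by
    intro h0; rw [hbR, h0, ENNReal.toReal_zero] at hbRpos; exact lt_irrefl _ hbRpos
  obtain ⟨y₀, hy₀A⟩ := nonempty_of_measure_ne_zero hA₂ne
  set d : ℝ≥0∞ := g y₀ with hddef
  have hgconst : ∀ y ∈ A₂, g y = d := fun y hy => hconst₂ y hy y₀ hy₀A
  have hgind : g = A₂.indicator (fun _ => d) := by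
    funext y
    by_cases hy : y ∈ A₂
    · simp [Set.indicator_of_mem hy, hgconst y hy]
    · simp [Set.indicator_of_notMem hy, hg0 y hy]
  have hPAdb : (P₁.prod P₂) A = d * P₂ A₂ := by
    rw [hPA2, hgind, lintegral_indicator hA₂m, setLIntegral_const]
  have hJ2 : ∫⁻ y, g y ^ 2 ∂P₂ = d ^ 2 * P₂ A₂ := by
    have h2 : (fun y => g y ^ 2) = A₂.indicator (fun _ => d ^ 2) := by
      funext y
      by_cases hy : y ∈ A₂
      · simp [Set.indicator_of_mem hy, hgconst y hy]
      · simp [Set.indicator_of_notMem hy, hg0 y hy]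
    rw [h2, lintegral_indicator hA₂m, setLIntegral_const]
  have key2 : P₂ A₂ * ∫⁻ y, g y ^ 2 ∂P₂ = ((P₁.prod P₂) A) ^ 2 := by
    rw [hJ2, hPAdb]; ring
  -- events
  set E : Fin M₁ → Fin M₂ → Set Ω := fun i j => (fun ω => (Z₁ i ω, Z₂ j ω)) ⁻¹' A with hEdef
  have hWm : ∀ i j, Measurable fun ω => (Z₁ i ω, Z₂ j ω) := fun i j => (hm₁ i).prodMk (hm₂ j)
  have hEm : ∀ i j, MeasurableSet (E i j) := fun i j => (hWm i j) hA
  -- law of the pair (Z₁ i, Z₂ j)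
  have indep_ij : ∀ (i : Fin M₁) (j : Fin M₂), IndepFun (Z₁ i) (Z₂ j) μ := fun i j =>
    hindep.comp (measurable_pi_apply i) (measurable_pi_apply j)
  have hmapP : ∀ i j, μ.map (fun ω => (Z₁ i ω, Z₂ j ω)) = P₁.prod P₂ := by
    intro i j
    have h := (indepFun_iff_map_prod_eq_prod_map_map (hm₁ i).aemeasurable
      (hm₂ j).aemeasurable).mp (indep_ij i j)
    rw [h, hid₁ i, hid₂ j]
  have hEp : ∀ i j, μ (E i j) = (P₁.prod P₂) A := by
    intro i j
    rw [hEdef, ← Measure.map_apply (hWm i j) hA, hmapP i j]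
  -- joint laws of pairs within a sequence
  have hmap22 : ∀ j j', j ≠ j' → μ.map (fun ω => (Z₂ j ω, Z₂ j' ω)) = P₂.prod P₂ := by
    intro j j' hjj
    have h := (indepFun_iff_map_prod_eq_prod_map_map (hm₂ j).aemeasurable
      (hm₂ j').aemeasurable).mp (hpi₂ j j' hjj)
    rw [h, hid₂ j, hid₂ j']
  have hmap11 : ∀ i i', i ≠ i' → μ.map (fun ω => (Z₁ i ω, Z₁ i' ω)) = P₁.prod P₁ := by
    intro i i' hii
    have h := (indepFun_iff_map_prod_eq_prod_map_map (hm₁ i).aemeasurable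
      (hm₁ i').aemeasurable).mp (hpi₁ i i' hii)
    rw [h, hid₁ i, hid₁ i']
  have hmap3 : ∀ (i : Fin M₁) j j', j ≠ j' →
      μ.map (fun ω => (Z₁ i ω, (Z₂ j ω, Z₂ j' ω))) = P₁.prod (P₂.prod P₂) := by
    intro i j j' hjj
    have hind : IndepFun (Z₁ i) (fun ω => (Z₂ j ω, Z₂ j' ω)) μ :=
      hindep.comp (measurable_pi_apply i)
        ((measurable_pi_apply j).prodMk (measurable_pi_apply j'))
    have h := (indepFun_iff_map_prod_eq_prod_map_map (hm₁ i).aemeasurable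
      ((hm₂ j).prodMk (hm₂ j')).aemeasurable).mp hind
    rw [h, hid₁ i, hmap22 j j' hjj]
  have hmap3' : ∀ i i' (j : Fin M₂), i ≠ i' →
      μ.map (fun ω => ((Z₁ i ω, Z₁ i' ω), Z₂ j ω)) = (P₁.prod P₁).prod P₂ := by
    intro i i' j hii
    have hind : IndepFun (fun ω => (Z₁ i ω, Z₁ i' ω)) (Z₂ j) μ :=
      hindep.comp ((measurable_pi_apply i).prodMk (measurable_pi_apply i'))
        (measurable_pi_apply j)
    have h := (indepFun_iff_map_prod_eq_prod_map_map
      ((hm₁ i).prodMk (hm₁ i')).aemeasurable (hm₂ j).aemeasurable).mp hind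
    rw [h, hid₂ j, hmap11 i i' hii]
  have hmap4 : ∀ i i' j j', i ≠ i' → j ≠ j' →
      μ.map (fun ω => ((Z₁ i ω, Z₁ i' ω), (Z₂ j ω, Z₂ j' ω)))
        = (P₁.prod P₁).prod (P₂.prod P₂) := by
    intro i i' j j' hii hjj
    have hind : IndepFun (fun ω => (Z₁ i ω, Z₁ i' ω)) (fun ω => (Z₂ j ω, Z₂ j' ω)) μ :=
      hindep.comp ((measurable_pi_apply i).prodMk (measurable_pi_apply i'))
        ((measurable_pi_apply j).prodMk (measurable_pi_apply j'))
    have h := (indepFun_iff_map_prod_eq_prod_map_map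
      ((hm₁ i).prodMk (hm₁ i')).aemeasurable
      ((hm₂ j).prodMk (hm₂ j')).aemeasurable).mp hind
    rw [h, hmap11 i i' hii, hmap22 j j' hjj]
  -- intersection probabilities
  have hEjj : ∀ (i : Fin M₁) j j', j ≠ j' →
      μ (E i j ∩ E i j') = ∫⁻ x, f x ^ 2 ∂P₁ := by
    intro i j j' hjj
    set T : Set (α × β × β) := {q | (q.1, q.2.1) ∈ A ∧ (q.1, q.2.2) ∈ A} with hTdef
    have hTm : MeasurableSet T := by
      have h1 : Measurable fun q : α × β × β => (q.1, q.2.1) :=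
        measurable_fst.prodMk (measurable_fst.comp measurable_snd)
      have h2 : Measurable fun q : α × β × β => (q.1, q.2.2) :=
        measurable_fst.prodMk (measurable_snd.comp measurable_snd)
      exact (h1 hA).inter (h2 hA)
    have hpre : E i j ∩ E i j' = (fun ω => (Z₁ i ω, (Z₂ j ω, Z₂ j' ω))) ⁻¹' T := by
      ext ω; simp [hEdef, hTdef]
    have hWm3 : Measurable fun ω => (Z₁ i ω, (Z₂ j ω, Z₂ j' ω)) :=
      (hm₁ i).prodMk ((hm₂ j).prodMk (hm₂ j'))
    rw [hpre, ← Measure.map_apply hWm3 hTm, hmap3 i j j' hjj, Measure.prod_apply hTm]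
    refine lintegral_congr fun x => ?_
    have hx : Prod.mk x ⁻¹' T = (Prod.mk x ⁻¹' A) ×ˢ (Prod.mk x ⁻¹' A) := by
      ext ⟨y, y'⟩; simp [hTdef]
    rw [hx, Measure.prod_prod, ← sq]
  have hEii : ∀ i i' (j : Fin M₂), i ≠ i' →
      μ (E i j ∩ E i' j) = ∫⁻ y, g y ^ 2 ∂P₂ := by
    intro i i' j hii
    set T : Set ((α × α) × β) := {q | (q.1.1, q.2) ∈ A ∧ (q.1.2, q.2) ∈ A} with hTdef
    have hTm : MeasurableSet T := by
      have h1 : Measurable fun q : (α × α) × β => (q.1.1, q.2) :=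
        (measurable_fst.comp measurable_fst).prodMk measurable_snd
      have h2 : Measurable fun q : (α × α) × β => (q.1.2, q.2) :=
        (measurable_snd.comp measurable_fst).prodMk measurable_snd
      exact (h1 hA).inter (h2 hA)
    have hpre : E i j ∩ E i' j = (fun ω => ((Z₁ i ω, Z₁ i' ω), Z₂ j ω)) ⁻¹' T := by
      ext ω; simp [hEdef, hTdef]
    have hWm3 : Measurable fun ω => ((Z₁ i ω, Z₁ i' ω), Z₂ j ω) :=
      ((hm₁ i).prodMk (hm₁ i')).prodMk (hm₂ j)
    rw [hpre, ← Measure.map_apply hWm3 hTm, hmap3' i i' j hii,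
      Measure.prod_apply_symm hTm]
    refine lintegral_congr fun y => ?_
    have hy : ((fun q : α × α => (q, y)) ⁻¹' T)
        = ((fun x => (x, y)) ⁻¹' A) ×ˢ ((fun x => (x, y)) ⁻¹' A) := by
      ext ⟨x, x'⟩; simp [hTdef]
    rw [hy, Measure.prod_prod, ← sq]
  have hE4 : ∀ i i' j j', i ≠ i' → j ≠ j' →
      μ (E i j ∩ E i' j') = ((P₁.prod P₂) A) ^ 2 := by
    intro i i' j j' hii hjj
    set T : Set ((α × α) × β × β) := {q | (q.1.1, q.2.1) ∈ A ∧ (q.1.2, q.2.2) ∈ A} with hTdef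
    have hTm : MeasurableSet T := by
      have h1 : Measurable fun q : (α × α) × β × β => (q.1.1, q.2.1) :=
        (measurable_fst.comp measurable_fst).prodMk (measurable_fst.comp measurable_snd)
      have h2 : Measurable fun q : (α × α) × β × β => (q.1.2, q.2.2) :=
        (measurable_snd.comp measurable_fst).prodMk (measurable_snd.comp measurable_snd)
      exact (h1 hA).inter (h2 hA)
    have hpre : E i j ∩ E i' j' = (fun ω => ((Z₁ i ω, Z₁ i' ω), (Z₂ j ω, Z₂ j' ω))) ⁻¹' T := by
      ext ω; simp [hEdef, hTdef]
    have hWm4 : Measurable fun ω => ((Z₁ i ω, Z₁ i' ω), (Z₂ j ω, Z₂ j' ω)) :=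
      ((hm₁ i).prodMk (hm₁ i')).prodMk ((hm₂ j).prodMk (hm₂ j'))
    rw [hpre, ← Measure.map_apply hWm4 hTm, hmap4 i i' j j' hii hjj,
      Measure.prod_apply hTm]
    have hx : ∀ q : α × α, (P₂.prod P₂) (Prod.mk q ⁻¹' T) = f q.1 * f q.2 := by
      intro q
      have : Prod.mk q ⁻¹' T = (Prod.mk q.1 ⁻¹' A) ×ˢ (Prod.mk q.2 ⁻¹' A) := by
        ext ⟨y, y'⟩; simp [hTdef]
      rw [this, Measure.prod_prod]
    calc ∫⁻ q, (P₂.prod P₂) (Prod.mk q ⁻¹' T) ∂(P₁.prod P₁)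
        = ∫⁻ q, f q.1 * f q.2 ∂(P₁.prod P₁) := lintegral_congr hx
      _ = (∫⁻ x, f x ∂P₁) * ∫⁻ x, f x ∂P₁ :=
          lintegral_prod_mul hfm.aemeasurable hfm.aemeasurable
      _ = ((P₁.prod P₂) A) ^ 2 := by rw [← hPA1, sq]
  set p : ℝ≥0∞ := (P₁.prod P₂) A with hpdef
  set I₂ : ℝ≥0∞ := ∫⁻ x, f x ^ 2 ∂P₁ with hI₂def
  set J₂ : ℝ≥0∞ := ∫⁻ y, g y ^ 2 ∂P₂ with hJ₂def
  set N : Ω → ℝ≥0∞ := fun ω => ∑ i : Fin M₁, ∑ j : Fin M₂, (E i j).indicator 1 ω with hNdef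
  have hNm : Measurable N := by
    refine Finset.measurable_sum _ fun i _ => Finset.measurable_sum _ fun j _ => ?_
    exact measurable_one.indicator (hEm i j)
  have hNint : ∫⁻ ω, N ω ∂μ = (M₁ : ℝ≥0∞) * (M₂ : ℝ≥0∞) * p := by
    have h1 : ∀ i : Fin M₁, ∫⁻ ω, ∑ j : Fin M₂, (E i j).indicator 1 ω ∂μ
        = ∑ _j : Fin M₂, p := by
      intro i
      rw [lintegral_finset_sum _ fun j _ => measurable_one.indicator (hEm i j)]
      exact Finset.sum_congr rfl fun j _ => by
        rw [lintegral_indicator_one (hEm i j), hEp i j]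
    rw [hNdef]
    rw [lintegral_finset_sum _ fun i _ =>
      Finset.measurable_sum _ fun j _ => measurable_one.indicator (hEm i j)]
    simp only [h1]
    simp [Finset.sum_const, Finset.card_univ, mul_assoc]
  -- expansion of N^2
  have hNsq : ∫⁻ ω, N ω ^ 2 ∂μ
      = ∑ i : Fin M₁, ∑ i' : Fin M₁, ∑ j : Fin M₂, ∑ j' : Fin M₂, μ (E i j ∩ E i' j') := by
    have hpt : ∀ ω, N ω ^ 2
        = ∑ i : Fin M₁, ∑ i' : Fin M₁, ∑ j : Fin M₂, ∑ j' : Fin M₂,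
            (E i j ∩ E i' j').indicator 1 ω := by
      intro ω
      rw [sq, hNdef, Finset.sum_mul_sum]
      refine Finset.sum_congr rfl fun i _ => Finset.sum_congr rfl fun i' _ => ?_
      rw [Finset.sum_mul_sum]
      refine Finset.sum_congr rfl fun j _ => Finset.sum_congr rfl fun j' _ => ?_
      rw [Set.inter_indicator_one]
      rfl
    simp only [hpt]
    rw [lintegral_finset_sum _ fun i _ => Finset.measurable_sum _ fun i' _ =>
      Finset.measurable_sum _ fun j _ => Finset.measurable_sum _ fun j' _ =>
        measurable_one.indicator ((hEm i j).inter (hEm i' j'))]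
    refine Finset.sum_congr rfl fun i _ => ?_
    rw [lintegral_finset_sum _ fun i' _ => Finset.measurable_sum _ fun j _ =>
      Finset.measurable_sum _ fun j' _ =>
        measurable_one.indicator ((hEm i j).inter (hEm i' j'))]
    refine Finset.sum_congr rfl fun i' _ => ?_
    rw [lintegral_finset_sum _ fun j _ => Finset.measurable_sum _ fun j' _ =>
        measurable_one.indicator ((hEm i j).inter (hEm i' j'))]
    refine Finset.sum_congr rfl fun j _ => ?_
    rw [lintegral_finset_sum _ fun j' _ =>
        measurable_one.indicator ((hEm i j).inter (hEm i' j'))]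
    exact Finset.sum_congr rfl fun j' _ => lintegral_indicator_one ((hEm i j).inter (hEm i' j'))
  -- bound the second moment
  have hrow1 : ∀ (i : Fin M₁) (j : Fin M₂),
      ∑ j' : Fin M₂, μ (E i j ∩ E i j') ≤ p + (M₂ : ℝ≥0∞) * I₂ := by
    intro i j
    have hsplit := (Finset.add_sum_erase Finset.univ (fun j' => μ (E i j ∩ E i j'))
      (Finset.mem_univ j)).symm
    rw [hsplit, Set.inter_self, hEp i j]
    refine add_le_add_right ?_ _
    calc ∑ j' ∈ Finset.univ.erase j, μ (E i j ∩ E i j')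
        = ∑ _j' ∈ Finset.univ.erase j, I₂ := Finset.sum_congr rfl fun j' hj' =>
          hEjj i j j' (Ne.symm (Finset.ne_of_mem_erase hj'))
      _ = ((Finset.univ.erase j).card : ℝ≥0∞) * I₂ := by
          rw [Finset.sum_const, nsmul_eq_mul]
      _ ≤ (M₂ : ℝ≥0∞) * I₂ := by
          refine mul_le_mul_left ?_ _
          exact_mod_cast Finset.card_erase_le.trans (by simp)
  have hrow2 : ∀ (i i' : Fin M₁) (j : Fin M₂), i ≠ i' →
      ∑ j' : Fin M₂, μ (E i j ∩ E i' j') ≤ J₂ + (M₂ : ℝ≥0∞) * p ^ 2 := by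
    intro i i' j hii
    have hsplit := (Finset.add_sum_erase Finset.univ (fun j' => μ (E i j ∩ E i' j'))
      (Finset.mem_univ j)).symm
    rw [hsplit, hEii i i' j hii]
    refine add_le_add_right ?_ _
    calc ∑ j' ∈ Finset.univ.erase j, μ (E i j ∩ E i' j')
        = ∑ _j' ∈ Finset.univ.erase j, p ^ 2 := Finset.sum_congr rfl fun j' hj' =>
          hE4 i i' j j' hii (Ne.symm (Finset.ne_of_mem_erase hj'))
      _ = ((Finset.univ.erase j).card : ℝ≥0∞) * p ^ 2 := by
          rw [Finset.sum_const, nsmul_eq_mul]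
      _ ≤ (M₂ : ℝ≥0∞) * p ^ 2 := by
          refine mul_le_mul_left ?_ _
          exact_mod_cast Finset.card_erase_le.trans (by simp)
  have hblock1 : ∀ i : Fin M₁,
      ∑ j : Fin M₂, ∑ j' : Fin M₂, μ (E i j ∩ E i j')
        ≤ (M₂ : ℝ≥0∞) * (p + (M₂ : ℝ≥0∞) * I₂) := by
    intro i
    calc ∑ j : Fin M₂, ∑ j' : Fin M₂, μ (E i j ∩ E i j')
        ≤ Finset.univ.card • (p + (M₂ : ℝ≥0∞) * I₂) :=
          Finset.sum_le_card_nsmul _ _ _ fun j _ => hrow1 i j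
      _ = (M₂ : ℝ≥0∞) * (p + (M₂ : ℝ≥0∞) * I₂) := by
          simp [nsmul_eq_mul, mul_add]
  have hblock2 : ∀ i i' : Fin M₁, i ≠ i' →
      ∑ j : Fin M₂, ∑ j' : Fin M₂, μ (E i j ∩ E i' j')
        ≤ (M₂ : ℝ≥0∞) * (J₂ + (M₂ : ℝ≥0∞) * p ^ 2) := by
    intro i i' hii
    calc ∑ j : Fin M₂, ∑ j' : Fin M₂, μ (E i j ∩ E i' j')
        ≤ Finset.univ.card • (J₂ + (M₂ : ℝ≥0∞) * p ^ 2) :=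
          Finset.sum_le_card_nsmul _ _ _ fun j _ => hrow2 i i' j hii
      _ = (M₂ : ℝ≥0∞) * (J₂ + (M₂ : ℝ≥0∞) * p ^ 2) := by
          simp [nsmul_eq_mul, mul_add]
  set B : ℝ≥0∞ := (M₁ : ℝ≥0∞) * ((M₂ : ℝ≥0∞) * (p + (M₂ : ℝ≥0∞) * I₂)
      + (M₁ : ℝ≥0∞) * ((M₂ : ℝ≥0∞) * (J₂ + (M₂ : ℝ≥0∞) * p ^ 2))) with hBdef
  have hS2B : ∫⁻ ω, N ω ^ 2 ∂μ ≤ B := by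
    rw [hNsq, hBdef]
    have hinner : ∀ i : Fin M₁,
        ∑ i' : Fin M₁, ∑ j : Fin M₂, ∑ j' : Fin M₂, μ (E i j ∩ E i' j')
          ≤ (M₂ : ℝ≥0∞) * (p + (M₂ : ℝ≥0∞) * I₂)
            + (M₁ : ℝ≥0∞) * ((M₂ : ℝ≥0∞) * (J₂ + (M₂ : ℝ≥0∞) * p ^ 2)) := by
      intro i
      have hsplit := (Finset.add_sum_erase Finset.univ
        (fun i' => ∑ j : Fin M₂, ∑ j' : Fin M₂, μ (E i j ∩ E i' j'))
        (Finset.mem_univ i)).symm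
      rw [hsplit]
      refine add_le_add (hblock1 i) ?_
      calc ∑ i' ∈ Finset.univ.erase i, ∑ j : Fin M₂, ∑ j' : Fin M₂, μ (E i j ∩ E i' j')
          ≤ (Finset.univ.erase i).card • ((M₂ : ℝ≥0∞) * (J₂ + (M₂ : ℝ≥0∞) * p ^ 2)) :=
            Finset.sum_le_card_nsmul _ _ _ fun i' hi' =>
              hblock2 i i' (Ne.symm (Finset.ne_of_mem_erase hi'))
        _ ≤ (M₁ : ℝ≥0∞) * ((M₂ : ℝ≥0∞) * (J₂ + (M₂ : ℝ≥0∞) * p ^ 2)) := by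
            rw [nsmul_eq_mul]
            refine mul_le_mul_left ?_ _
            exact_mod_cast Finset.card_erase_le.trans (by simp)
    calc ∑ i : Fin M₁, ∑ i' : Fin M₁, ∑ j : Fin M₂, ∑ j' : Fin M₂, μ (E i j ∩ E i' j')
        ≤ Finset.univ.card • ((M₂ : ℝ≥0∞) * (p + (M₂ : ℝ≥0∞) * I₂)
            + (M₁ : ℝ≥0∞) * ((M₂ : ℝ≥0∞) * (J₂ + (M₂ : ℝ≥0∞) * p ^ 2))) :=
          Finset.sum_le_card_nsmul _ _ _ fun i _ => hinner i
      _ = _ := by simp [nsmul_eq_mul, mul_add]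
  -- the union and Cauchy-Schwarz
  set U : Set Ω := {ω | ∃ i j, (Z₁ i ω, Z₂ j ω) ∈ A} with hUdef
  have hUm : MeasurableSet U := by
    have hU : U = ⋃ i, ⋃ j, E i j := by
      ext ω; simp [hUdef, hEdef, Set.mem_iUnion]
    rw [hU]
    exact MeasurableSet.iUnion fun i => MeasurableSet.iUnion fun j => hEm i j
  have hN0 : ∀ ω, ω ∉ U → N ω = 0 := by
    intro ω hω
    rw [hNdef]
    refine Finset.sum_eq_zero fun i _ => Finset.sum_eq_zero fun j _ => ?_
    have hne : ω ∉ E i j := fun h => hω ⟨i, j, h⟩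
    simp [Set.indicator_of_notMem hne]
  have hgUm : Measurable (U.indicator (1 : Ω → ℝ≥0∞)) := measurable_one.indicator hUm
  have hpq : Real.HolderConjugate 2 2 := Real.HolderConjugate.two_two
  have hCS := ENNReal.lintegral_mul_le_Lp_mul_Lq μ hpq hNm.aemeasurable hgUm.aemeasurable
  have hNg : ∫⁻ ω, (N * U.indicator (1 : Ω → ℝ≥0∞)) ω ∂μ = ∫⁻ ω, N ω ∂μ := by
    refine lintegral_congr fun ω => ?_
    by_cases hω : ω ∈ U
    · simp [Set.indicator_of_mem hω]
    · simp [hN0 ω hω, Set.indicator_of_notMem hω]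
  have hrpowN : ∀ ω, N ω ^ (2 : ℝ) = N ω ^ 2 := fun ω => by
    rw [show (2 : ℝ) = ((2 : ℕ) : ℝ) by norm_num, ENNReal.rpow_natCast]
  have hrpowU : ∫⁻ ω, U.indicator (1 : Ω → ℝ≥0∞) ω ^ (2 : ℝ) ∂μ = μ U := by
    have : ∀ ω, U.indicator (1 : Ω → ℝ≥0∞) ω ^ (2 : ℝ) = U.indicator 1 ω := by
      intro ω
      by_cases hω : ω ∈ U
      · simp [Set.indicator_of_mem hω]
      · simp [Set.indicator_of_notMem hω]
    rw [lintegral_congr this, lintegral_indicator_one hUm]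
  rw [hNg, hNint] at hCS
  simp only [hrpowN] at hCS
  rw [hrpowU] at hCS
  set S2 : ℝ≥0∞ := ∫⁻ ω, N ω ^ 2 ∂μ with hS2def
  have hsq : ((M₁ : ℝ≥0∞) * (M₂ : ℝ≥0∞) * p) ^ 2 ≤ S2 * μ U := by
    have h2 := mul_le_mul' hCS hCS
    calc ((M₁ : ℝ≥0∞) * (M₂ : ℝ≥0∞) * p) ^ 2
        = ((M₁ : ℝ≥0∞) * (M₂ : ℝ≥0∞) * p) * ((M₁ : ℝ≥0∞) * (M₂ : ℝ≥0∞) * p) := sq _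
      _ ≤ (S2 ^ (1 / (2:ℝ)) * μ U ^ (1 / (2:ℝ))) * (S2 ^ (1 / (2:ℝ)) * μ U ^ (1 / (2:ℝ))) := h2
      _ = (S2 ^ (1 / (2:ℝ)) * S2 ^ (1 / (2:ℝ))) * (μ U ^ (1 / (2:ℝ)) * μ U ^ (1 / (2:ℝ))) := by
          ring
      _ = S2 * μ U := by
          rw [← ENNReal.rpow_add_of_nonneg _ _ (by norm_num) (by norm_num),
            ← ENNReal.rpow_add_of_nonneg _ _ (by norm_num) (by norm_num)]
          norm_num
  have hMB : ((M₁ : ℝ≥0∞) * (M₂ : ℝ≥0∞) * p) ^ 2 ≤ B * μ U :=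
    hsq.trans (mul_le_mul_left hS2B _)
  -- pass to real numbers
  have hpne : p ≠ ∞ := measure_ne_top _ _
  have hI₂ne : I₂ ≠ ∞ := by
    rw [hI2]
    exact ENNReal.mul_ne_top (ENNReal.pow_ne_top (measure_ne_top _ _)) (measure_ne_top _ _)
  have hJ₂ne : J₂ ≠ ∞ := by
    rw [hJ2]
    exact ENNReal.mul_ne_top (ENNReal.pow_ne_top (measure_ne_top _ _)) (measure_ne_top _ _)
  have hX1ne : (M₂ : ℝ≥0∞) * (p + (M₂ : ℝ≥0∞) * I₂) ≠ ∞ :=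
    ENNReal.mul_ne_top (ENNReal.natCast_ne_top _)
      (ENNReal.add_ne_top.2 ⟨hpne, ENNReal.mul_ne_top (ENNReal.natCast_ne_top _) hI₂ne⟩)
  have hX2ne : (M₂ : ℝ≥0∞) * (J₂ + (M₂ : ℝ≥0∞) * p ^ 2) ≠ ∞ :=
    ENNReal.mul_ne_top (ENNReal.natCast_ne_top _)
      (ENNReal.add_ne_top.2 ⟨hJ₂ne,
        ENNReal.mul_ne_top (ENNReal.natCast_ne_top _) (ENNReal.pow_ne_top hpne)⟩)
  have hBne : B ≠ ∞ := by
    rw [hBdef]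
    exact ENNReal.mul_ne_top (ENNReal.natCast_ne_top _)
      (ENNReal.add_ne_top.2 ⟨hX1ne, ENNReal.mul_ne_top (ENNReal.natCast_ne_top _) hX2ne⟩)
  set I₂R : ℝ := I₂.toReal with hI₂R
  set J₂R : ℝ := J₂.toReal with hJ₂R
  set u : ℝ := (μ U).toReal with hu
  have haI : aR * I₂R = pR ^ 2 := by
    rw [haR, hI₂R, hpR, ← ENNReal.toReal_mul, key1, ENNReal.toReal_pow]
  have hbJ : bR * J₂R = pR ^ 2 := by
    rw [hbR, hJ₂R, hpR, ← ENNReal.toReal_mul, key2, ENNReal.toReal_pow]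
  have hBR : B.toReal = (M₁ : ℝ) * ((M₂ : ℝ) * (pR + (M₂ : ℝ) * I₂R)
      + (M₁ : ℝ) * ((M₂ : ℝ) * (J₂R + (M₂ : ℝ) * pR ^ 2))) := by
    rw [hBdef, ENNReal.toReal_mul, ENNReal.toReal_add hX1ne
      (ENNReal.mul_ne_top (ENNReal.natCast_ne_top _) hX2ne),
      ENNReal.toReal_mul, ENNReal.toReal_mul, ENNReal.toReal_add hpne
      (ENNReal.mul_ne_top (ENNReal.natCast_ne_top _) hI₂ne),
      ENNReal.toReal_mul, ENNReal.toReal_mul, ENNReal.toReal_add hJ₂ne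
      (ENNReal.mul_ne_top (ENNReal.natCast_ne_top _) (ENNReal.pow_ne_top hpne)),
      ENNReal.toReal_mul, ENNReal.toReal_pow]
    simp [hpR, hI₂R, hJ₂R]
  have hreal : ((M₁ : ℝ) * (M₂ : ℝ) * pR) ^ 2 ≤ B.toReal * u := by
    have h := ENNReal.toReal_mono (ENNReal.mul_ne_top hBne (measure_ne_top μ U)) hMB
    rw [ENNReal.toReal_pow, ENNReal.toReal_mul, ENNReal.toReal_mul,
      ENNReal.toReal_natCast, ENNReal.toReal_natCast, ENNReal.toReal_mul] at h
    rw [hu, hpR]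
    exact h
  -- final arithmetic
  have hI₂Rnn : 0 ≤ I₂R := ENNReal.toReal_nonneg
  have hJ₂Rnn : 0 ≤ J₂R := ENNReal.toReal_nonneg
  have hunn : 0 ≤ u := ENNReal.toReal_nonneg
  set mR : ℝ := (M₁ : ℝ) * (M₂ : ℝ) * pR with hmR
  have e1 : t * mR ≤ mR ^ 2 := by
    rw [sq]; exact mul_le_mul_of_nonneg_right htm hmRpos.le
  have e2 : t * ((M₁ : ℝ) * ((M₂ : ℝ) * ((M₂ : ℝ) * I₂R))) ≤ mR ^ 2 := by
    have h0 : (0:ℝ) ≤ (M₁ : ℝ) * ((M₂ : ℝ) * ((M₂ : ℝ) * I₂R)) :=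
      mul_nonneg (Nat.cast_nonneg _) (mul_nonneg (Nat.cast_nonneg _)
        (mul_nonneg (Nat.cast_nonneg _) hI₂Rnn))
    have h1 := mul_le_mul_of_nonneg_right hta h0
    have h2 : ((M₁ : ℝ) * aR) * ((M₁ : ℝ) * ((M₂ : ℝ) * ((M₂ : ℝ) * I₂R))) = mR ^ 2 := by
      rw [hmR]; linear_combination ((M₁:ℝ)^2 * (M₂:ℝ)^2) * haI
    linarith [h1, h2.le, h2.ge]
  have e3 : t * ((M₁ : ℝ) * ((M₁ : ℝ) * ((M₂ : ℝ) * J₂R))) ≤ mR ^ 2 := by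
    have h0 : (0:ℝ) ≤ (M₁ : ℝ) * ((M₁ : ℝ) * ((M₂ : ℝ) * J₂R)) :=
      mul_nonneg (Nat.cast_nonneg _) (mul_nonneg (Nat.cast_nonneg _)
        (mul_nonneg (Nat.cast_nonneg _) hJ₂Rnn))
    have h1 := mul_le_mul_of_nonneg_right htb h0
    have h2 : ((M₂ : ℝ) * bR) * ((M₁ : ℝ) * ((M₁ : ℝ) * ((M₂ : ℝ) * J₂R))) = mR ^ 2 := by
      rw [hmR]; linear_combination ((M₁:ℝ)^2 * (M₂:ℝ)^2) * hbJ
    linarith [h1, h2.le, h2.ge]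
  have e4 : t * ((M₁ : ℝ) * ((M₁ : ℝ) * ((M₂ : ℝ) * ((M₂ : ℝ) * pR ^ 2)))) ≤ mR ^ 2 := by
    have h0 : (0:ℝ) ≤ (M₁ : ℝ) * ((M₁ : ℝ) * ((M₂ : ℝ) * ((M₂ : ℝ) * pR ^ 2))) :=
      mul_nonneg (Nat.cast_nonneg _) (mul_nonneg (Nat.cast_nonneg _)
        (mul_nonneg (Nat.cast_nonneg _) (mul_nonneg (Nat.cast_nonneg _) (sq_nonneg _))))
    have h1 := mul_le_mul_of_nonneg_right ht1 h0
    have h2 : (M₁ : ℝ) * ((M₁ : ℝ) * ((M₂ : ℝ) * ((M₂ : ℝ) * pR ^ 2))) = mR ^ 2 := by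
      rw [hmR]; ring
    linarith [h1, h2.le, h2.ge]
  have hBRexp : B.toReal = mR + (M₁ : ℝ) * ((M₂ : ℝ) * ((M₂ : ℝ) * I₂R))
      + (M₁ : ℝ) * ((M₁ : ℝ) * ((M₂ : ℝ) * J₂R))
      + (M₁ : ℝ) * ((M₁ : ℝ) * ((M₂ : ℝ) * ((M₂ : ℝ) * pR ^ 2))) := by
    rw [hBR, hmR]; ring
  have htB : t * B.toReal ≤ 4 * mR ^ 2 := by
    rw [hBRexp, mul_add, mul_add, mul_add]
    linarith [e1, e2, e3, e4]
  have hBRpos : 0 < B.toReal := by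
    rw [hBRexp]
    have n1 : (0:ℝ) ≤ (M₁ : ℝ) * ((M₂ : ℝ) * ((M₂ : ℝ) * I₂R)) :=
      mul_nonneg (Nat.cast_nonneg _) (mul_nonneg (Nat.cast_nonneg _)
        (mul_nonneg (Nat.cast_nonneg _) hI₂Rnn))
    have n2 : (0:ℝ) ≤ (M₁ : ℝ) * ((M₁ : ℝ) * ((M₂ : ℝ) * J₂R)) :=
      mul_nonneg (Nat.cast_nonneg _) (mul_nonneg (Nat.cast_nonneg _)
        (mul_nonneg (Nat.cast_nonneg _) hJ₂Rnn))
    have n3 : (0:ℝ) ≤ (M₁ : ℝ) * ((M₁ : ℝ) * ((M₂ : ℝ) * ((M₂ : ℝ) * pR ^ 2))) :=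
      mul_nonneg (Nat.cast_nonneg _) (mul_nonneg (Nat.cast_nonneg _)
        (mul_nonneg (Nat.cast_nonneg _) (mul_nonneg (Nat.cast_nonneg _) (sq_nonneg _))))
    have n0 : (0:ℝ) < mR := hmRpos
    linarith
  have hfin : t ≤ 4 * u := by
    have h1 : t * B.toReal ≤ 4 * (B.toReal * u) := le_trans htB (by linarith [hreal])
    have h2 : t * B.toReal ≤ (4 * u) * B.toReal := h1.trans_eq (by ring)
    exact le_of_mul_le_mul_right h2 hBRpos
  linarith [hfin]
end
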